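/- Let p be an odd prime, k \geq 1, and d a positive integer not divisible by p. Then \binom{3 p^k d - 1}{p^k d - 1} \equiv \binom{3 p^{k-1} d - 1}{p^{k-1} d - 1} \pmod{p^{3k}}. -/

import Mathlib

open Finset

-- sum of squares identity
lemma sum_sq_aux (N : ℕ) : 6 * ∑ i ∈ range N, i^2 + 3*N^2 = 2*N^3 + N := by
  induction N with
  | zero => simp
  | succ n ih =>
    rw [Finset.sum_range_succ]
    zify at ih ⊢
    linear_combination ih

-- shifted factorial product
lemma prod_shift (w c : ℕ) : (∏ j ∈ Ico 1 (w+1), (c+j)) * c.factorial = (c+w).factorial := by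
  induction w with
  | zero => simp
  | succ n ih =>
    rw [Finset.prod_Ico_succ_top (by omega)]
    rw [mul_right_comm, ih]
    rw [← Nat.add_assoc]
    rw [Nat.factorial_succ, mul_comm]

-- product of 1 + eps * t
lemma prod_one_add_eps {R : Type*} [CommRing R] {α : Type*} (ε : R) (hε : ε^2 = 0)
    (s : Finset α) (t : α → R) : ∏ i ∈ s, (1 + ε * t i) = 1 + ε * ∑ i ∈ s, t i := by
  induction s using Finset.cons_induction with
  | empty => simp
  | cons a s ha ih =>
    rw [Finset.prod_cons, ih, Finset.sum_cons]
    linear_combination (t a * ∑ i ∈ s, t i) * hε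

lemma split_prod (p n : ℕ) (hp : 0 < p) (hn : 0 < n) (f : ℕ → ℕ) :
    ∏ j ∈ Ico 1 (p*n), f j
      = (∏ j ∈ (Ico 1 (p*n)).filter (fun j => ¬ p ∣ j), f j) * ∏ i ∈ Ico 1 n, f (p*i) := by
  rw [← Finset.prod_filter_mul_prod_filter_not (Ico 1 (p*n)) (fun j => p ∣ j) f, mul_comm]
  congr 1
  refine Finset.prod_nbij' (fun j => j / p) (fun i => p * i) ?_ ?_ ?_ ?_ ?_
  · intro a ha
    rw [Finset.mem_filter, Finset.mem_Ico] at ha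
    obtain ⟨⟨h1, h2⟩, c, rfl⟩ := ha
    beta_reduce
    rw [Nat.mul_div_cancel_left c hp, Finset.mem_Ico]
    constructor
    · rcases Nat.eq_zero_or_pos c with rfl | h
      · omega
      · exact h
    · exact Nat.lt_of_mul_lt_mul_left h2
  · intro a ha
    rw [Finset.mem_Ico] at ha
    rw [Finset.mem_filter, Finset.mem_Ico]
    exact ⟨⟨by nlinarith [ha.1], by have := ha.2; exact Nat.mul_lt_mul_left hp |>.mpr this⟩,
      ⟨a, rfl⟩⟩
  · intro a ha
    rw [Finset.mem_filter] at ha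
    obtain ⟨-, c, rfl⟩ := ha
    beta_reduce
    rw [Nat.mul_div_cancel_left c hp]
  · intro a _
    beta_reduce
    rw [Nat.mul_div_cancel_left a hp]
  · intro a ha
    rw [Finset.mem_filter] at ha
    obtain ⟨-, c, rfl⟩ := ha
    beta_reduce
    rw [Nat.mul_div_cancel_left c hp]

lemma key_nat (p n : ℕ) (hp : 0 < p) (hn : 0 < n) :
    Nat.choose (3*(p*n) - 1) ((p*n) - 1) * ∏ j ∈ (Ico 1 (p*n)).filter (fun j => ¬ p ∣ j), j
      = Nat.choose (3*n - 1) (n - 1) * ∏ j ∈ (Ico 1 (p*n)).filter (fun j => ¬ p ∣ j), (2*(p*n) + j) := by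
  set m := p * n with hm
  have hm1 : 1 ≤ m := Nat.one_le_iff_ne_zero.mpr (by positivity)
  -- factorial identities
  have E2 : (∏ j ∈ Ico 1 m, (2*m + j)) * (2*m).factorial = (3*m - 1).factorial := by
    have := prod_shift (m - 1) (2*m)
    rw [Nat.sub_add_cancel hm1] at this
    rw [this]; congr 1; omega
  have E5 : (∏ j ∈ Ico 1 n, (2*n + j)) * (2*n).factorial = (3*n - 1).factorial := by
    have := prod_shift (n - 1) (2*n)
    rw [Nat.sub_add_cancel hn] at this
    rw [this]; congr 1; omega
  have Efac : ∏ j ∈ Ico 1 m, j = (m - 1).factorial := by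
    have := prod_shift (m - 1) 0
    simpa [Nat.sub_add_cancel hm1] using this
  have Efacn : ∏ j ∈ Ico 1 n, j = (n - 1).factorial := by
    have := prod_shift (n - 1) 0
    simpa [Nat.sub_add_cancel hn] using this
  have E1 : Nat.choose (3*m - 1) (m - 1) * (m-1).factorial * (2*m).factorial
      = (3*m - 1).factorial := by
    have h := Nat.choose_mul_factorial_mul_factorial (n := 3*m - 1) (k := m - 1) (by omega)
    rw [show 3*m - 1 - (m-1) = 2*m by omega] at h
    exact h
  have E6 : Nat.choose (3*n - 1) (n - 1) * (n-1).factorial * (2*n).factorial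
      = (3*n - 1).factorial := by
    have h := Nat.choose_mul_factorial_mul_factorial (n := 3*n - 1) (k := n - 1) (by omega)
    rw [show 3*n - 1 - (n-1) = 2*n by omega] at h
    exact h
  -- from E5, E6: ∏_{Ico 1 n}(2n+i) = C_n * (n-1)!
  have E56 : ∏ j ∈ Ico 1 n, (2*n + j) = Nat.choose (3*n-1) (n-1) * (n-1).factorial :=
    Nat.eq_of_mul_eq_mul_right (Nat.factorial_pos _) (by rw [E5, ← E6])
  -- from E1, E2
  have E12 : Nat.choose (3*m-1) (m-1) * (m-1).factorial = ∏ j ∈ Ico 1 m, (2*m + j) :=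
    Nat.eq_of_mul_eq_mul_right (Nat.factorial_pos _) (by rw [E1, E2])
  -- splits
  have E3 : (m-1).factorial
      = (∏ j ∈ (Ico 1 m).filter (fun j => ¬ p ∣ j), j) * (p^(n-1) * (n-1).factorial) := by
    rw [← Efac, split_prod p n hp hn (fun j => j)]
    congr 1
    rw [Finset.prod_mul_distrib, Finset.prod_const, Nat.card_Ico, Efacn]
  have E4 : ∏ j ∈ Ico 1 m, (2*m + j)
      = (∏ j ∈ (Ico 1 m).filter (fun j => ¬ p ∣ j), (2*m + j))
        * (p^(n-1) * ∏ i ∈ Ico 1 n, (2*n + i)) := by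
    rw [split_prod p n hp hn (fun j => 2*m + j)]
    congr 1
    rw [show (∏ i ∈ Ico 1 n, (2*m + p*i)) = ∏ i ∈ Ico 1 n, p * (2*n + i) by
      apply Finset.prod_congr rfl; intro i _; rw [hm]; ring]
    rw [Finset.prod_mul_distrib, Finset.prod_const, Nat.card_Ico]
  -- assemble
  apply Nat.eq_of_mul_eq_mul_right (show 0 < p^(n-1) * (n-1).factorial by positivity)
  calc Nat.choose (3*m-1) (m-1) * (∏ j ∈ (Ico 1 m).filter (fun j => ¬ p ∣ j), j)
        * (p^(n-1) * (n-1).factorial)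
      = Nat.choose (3*m-1) (m-1) * (m-1).factorial := by rw [E3]; ring
    _ = ∏ j ∈ Ico 1 m, (2*m + j) := E12
    _ = (∏ j ∈ (Ico 1 m).filter (fun j => ¬ p ∣ j), (2*m + j))
        * (p^(n-1) * (Nat.choose (3*n-1) (n-1) * (n-1).factorial)) := by rw [E4, E56]
    _ = Nat.choose (3*n-1) (n-1) * (∏ j ∈ (Ico 1 m).filter (fun j => ¬ p ∣ j), (2*m+j))
        * (p^(n-1) * (n-1).factorial) := by ring

lemma unit_of_notdvd {p K j : ℕ} (hp : p.Prime) (h : ¬ p ∣ j) :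
    IsUnit (j : ZMod (p^K)) := by
  rw [ZMod.isUnit_iff_coprime]
  exact ((hp.coprime_iff_not_dvd).mpr h).symm.pow_right K

-- split of sum of squares over range p^k
lemma split_sum_sq (p k : ℕ) (hp : 0 < p) (hk : 1 ≤ k) :
    ∑ j ∈ range (p^k), j^2
      = (∑ j ∈ (range (p^k)).filter (fun j => ¬ p ∣ j), j^2)
        + p^2 * ∑ i ∈ range (p^(k-1)), i^2 := by
  have hpk : p^k = p * p^(k-1) := by
    rw [← pow_succ']
    congr 1
    omega
  rw [← Finset.sum_filter_add_sum_filter_not (range (p^k)) (fun j => p ∣ j) (fun j => j^2),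
    add_comm]
  congr 1
  rw [Finset.mul_sum]
  refine Finset.sum_nbij' (fun j => j / p) (fun i => p * i) ?_ ?_ ?_ ?_ ?_
  · intro a ha
    rw [Finset.mem_filter, Finset.mem_range] at ha
    obtain ⟨h1, c, rfl⟩ := ha
    beta_reduce
    rw [Nat.mul_div_cancel_left c hp, Finset.mem_range]
    rw [hpk] at h1
    exact Nat.lt_of_mul_lt_mul_left h1
  · intro a ha
    rw [Finset.mem_range] at ha
    rw [Finset.mem_filter, Finset.mem_range]
    constructor
    · rw [hpk]
      exact Nat.mul_lt_mul_left hp |>.mpr ha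
    · exact ⟨a, rfl⟩
  · intro a ha
    rw [Finset.mem_filter] at ha
    obtain ⟨-, c, rfl⟩ := ha
    beta_reduce
    rw [Nat.mul_div_cancel_left c hp]
  · intro a _
    beta_reduce
    rw [Nat.mul_div_cancel_left a hp]
  · intro a ha
    rw [Finset.mem_filter] at ha
    obtain ⟨-, c, rfl⟩ := ha
    beta_reduce
    rw [Nat.mul_div_cancel_left c hp]
    ring

lemma six_filter_sum (p k : ℕ) (hp : p.Prime) (hk : 1 ≤ k) :
    (6 : ZMod (p^k)) * ((∑ j ∈ (range (p^k)).filter (fun j => ¬ p ∣ j), j^2 : ℕ) : ZMod (p^k)) = 0 := by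
  set Z := ZMod (p^k) with hZ
  have hY : ((p : Z))^k = 0 := by
    rw [← Nat.cast_pow, ZMod.natCast_self]
  have ht : (p : Z) * (p : Z)^(k-1) = 0 := by
    rw [← pow_succ', show k - 1 + 1 = k by omega, hY]
  have c1 := congrArg (Nat.cast : ℕ → ZMod (p^k)) (sum_sq_aux (p^k))
  have c2 := congrArg (Nat.cast : ℕ → ZMod (p^k)) (sum_sq_aux (p^(k-1)))
  push_cast at c1 c2
  have hsc := congrArg (Nat.cast : ℕ → ZMod (p^k)) (split_sum_sq p k hp.pos hk)
  push_cast at hsc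
  push_cast
  have z1 : (6 : Z) * ∑ x ∈ range (p^k), (x : Z)^2 = 0 := by
    linear_combination c1 + (2*((p:Z)^k)^2 + 1 - 3*(p:Z)^k) * hY
  have z2 : (6 : Z) * ((p:Z)^2 * ∑ x ∈ range (p^(k-1)), (x : Z)^2) = 0 := by
    linear_combination (p:Z)^2 * c2
      + (2*(p:Z)*((p:Z)^(k-1))^2 + (p:Z) - 3*(p:Z)*(p:Z)^(k-1)) * ht
  linear_combination (-6 : Z) * hsc + z1 - z2

lemma six_inv_sum (p k : ℕ) (hp : p.Prime) (hk : 1 ≤ k) :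
    (6 : ZMod (p^k)) * ∑ j ∈ (range (p^k)).filter (fun j => ¬ p ∣ j),
      ((j : ZMod (p^k))⁻¹)^2 = 0 := by
  haveI : NeZero (p^k) := ⟨pow_ne_zero k hp.pos.ne'⟩
  set Z := ZMod (p^k) with hZ
  have hmain : ∑ j ∈ (range (p^k)).filter (fun j => ¬ p ∣ j), ((j : Z)⁻¹)^2
      = ∑ j ∈ (range (p^k)).filter (fun j => ¬ p ∣ j), ((j : Z))^2 := by
    refine Finset.sum_nbij' (fun j => ((j : Z)⁻¹).val) (fun j => ((j : Z)⁻¹).val)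
      ?_ ?_ ?_ ?_ ?_
    · intro a ha
      rw [Finset.mem_filter, Finset.mem_range] at ha ⊢
      obtain ⟨h1, h2⟩ := ha
      have hu : IsUnit ((a : Z)) := unit_of_notdvd hp h2
      have hv : IsUnit ((a : Z)⁻¹) :=
        IsUnit.of_mul_eq_one _ (ZMod.inv_mul_of_unit _ hu)
      refine ⟨ZMod.val_lt _, fun hdvd => ?_⟩
      have : IsUnit ((((a : Z)⁻¹).val : ℕ) : Z) := by
        rwa [ZMod.natCast_val, ZMod.cast_id]
      rw [ZMod.isUnit_iff_coprime] at this
      have hpk : p ∣ p ^ k := dvd_pow_self p (by omega)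
      have h1 : p ∣ Nat.gcd (((a : Z)⁻¹).val) (p^k) := Nat.dvd_gcd hdvd hpk
      rw [Nat.Coprime] at this
      rw [this] at h1
      exact Nat.Prime.one_lt hp |>.ne' (Nat.dvd_one.mp h1)
    · intro a ha
      rw [Finset.mem_filter, Finset.mem_range] at ha ⊢
      obtain ⟨h1, h2⟩ := ha
      have hu : IsUnit ((a : Z)) := unit_of_notdvd hp h2
      have hv : IsUnit ((a : Z)⁻¹) :=
        IsUnit.of_mul_eq_one _ (ZMod.inv_mul_of_unit _ hu)
      refine ⟨ZMod.val_lt _, fun hdvd => ?_⟩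
      have : IsUnit ((((a : Z)⁻¹).val : ℕ) : Z) := by
        rwa [ZMod.natCast_val, ZMod.cast_id]
      rw [ZMod.isUnit_iff_coprime] at this
      have hpk : p ∣ p ^ k := dvd_pow_self p (by omega)
      have h1 : p ∣ Nat.gcd (((a : Z)⁻¹).val) (p^k) := Nat.dvd_gcd hdvd hpk
      rw [Nat.Coprime] at this
      rw [this] at h1
      exact Nat.Prime.one_lt hp |>.ne' (Nat.dvd_one.mp h1)
    · intro a ha
      rw [Finset.mem_filter, Finset.mem_range] at ha
      obtain ⟨h1, h2⟩ := ha
      have hu : IsUnit ((a : Z)) := unit_of_notdvd hp h2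
      have hv : IsUnit ((a : Z)⁻¹) :=
        IsUnit.of_mul_eq_one _ (ZMod.inv_mul_of_unit _ hu)
      have e1 : ((((a : Z)⁻¹).val : ℕ) : Z) = (a : Z)⁻¹ := by
        rw [ZMod.natCast_val, ZMod.cast_id]
      beta_reduce
      rw [e1]
      have e2 : ((a : Z)⁻¹)⁻¹ = (a : Z) := by
        calc ((a:Z)⁻¹)⁻¹ = ((a:Z)⁻¹)⁻¹ * ((a:Z)⁻¹ * (a:Z)) := by
              rw [ZMod.inv_mul_of_unit _ hu, mul_one]
          _ = (((a:Z)⁻¹)⁻¹ * (a:Z)⁻¹) * (a:Z) := by ring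
          _ = (a:Z) := by rw [ZMod.inv_mul_of_unit _ hv, one_mul]
      rw [e2, ZMod.val_cast_of_lt h1]
    · intro a ha
      rw [Finset.mem_filter, Finset.mem_range] at ha
      obtain ⟨h1, h2⟩ := ha
      have hu : IsUnit ((a : Z)) := unit_of_notdvd hp h2
      have hv : IsUnit ((a : Z)⁻¹) :=
        IsUnit.of_mul_eq_one _ (ZMod.inv_mul_of_unit _ hu)
      have e1 : ((((a : Z)⁻¹).val : ℕ) : Z) = (a : Z)⁻¹ := by
        rw [ZMod.natCast_val, ZMod.cast_id]
      beta_reduce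
      rw [e1]
      have e2 : ((a : Z)⁻¹)⁻¹ = (a : Z) := by
        calc ((a:Z)⁻¹)⁻¹ = ((a:Z)⁻¹)⁻¹ * ((a:Z)⁻¹ * (a:Z)) := by
              rw [ZMod.inv_mul_of_unit _ hu, mul_one]
          _ = (((a:Z)⁻¹)⁻¹ * (a:Z)⁻¹) * (a:Z) := by ring
          _ = (a:Z) := by rw [ZMod.inv_mul_of_unit _ hv, one_mul]
      rw [e2, ZMod.val_cast_of_lt h1]
    · intro a ha
      beta_reduce
      rw [ZMod.natCast_val, ZMod.cast_id]
  rw [hmain]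
  have := six_filter_sum p k hp hk
  push_cast at this
  exact this

lemma block_sum {β : Type*} [AddCommMonoid β] (F : ℕ → β) (N : ℕ)
    (hper : ∀ t i, F (N*t + i) = F i) (e : ℕ) :
    ∑ j ∈ range (N*e), F j = e • ∑ j ∈ range N, F j := by
  induction e with
  | zero => simp
  | succ e ih =>
    rw [Nat.mul_succ, Finset.sum_range_add, ih, succ_nsmul]
    congr 1
    exact Finset.sum_congr rfl (fun i _ => hper e i)

lemma P2zero (p k d : ℕ) (hp : p.Prime) (hk : 1 ≤ k) (y : ℕ → ZMod (p^k))
    (hy : ∀ j ∈ (range (p^k*d)).filter (fun j => ¬ p ∣ j), (j : ZMod (p^k)) * y j = 1) :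
    (6 : ZMod (p^k)) * ∑ j ∈ (range (p^k*d)).filter (fun j => ¬ p ∣ j), (y j)^2 = 0 := by
  haveI : NeZero (p^k) := ⟨pow_ne_zero k hp.pos.ne'⟩
  have hyinv : ∀ j ∈ (range (p^k*d)).filter (fun j => ¬ p ∣ j), (y j)^2 = ((j : ZMod (p^k))⁻¹)^2 := by
    intro j hj
    have hj' := hj
    rw [Finset.mem_filter] at hj'
    have hu : IsUnit ((j : ZMod (p^k))) := unit_of_notdvd hp hj'.2
    have : (j : ZMod (p^k))⁻¹ = y j := by
      calc (j : ZMod (p^k))⁻¹ = (j : ZMod (p^k))⁻¹ * ((j : ZMod (p^k)) * y j) := by rw [hy j hj, mul_one]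
        _ = ((j : ZMod (p^k))⁻¹ * (j : ZMod (p^k))) * y j := by ring
        _ = y j := by rw [ZMod.inv_mul_of_unit _ hu, one_mul]
    rw [this]
  rw [Finset.sum_congr rfl hyinv, Finset.sum_filter]
  have hsum : ∑ j ∈ range (p^k*d), (if ¬ p ∣ j then ((j : ZMod (p^k))⁻¹)^2 else 0)
      = d • ∑ j ∈ range (p^k), (if ¬ p ∣ j then ((j : ZMod (p^k))⁻¹)^2 else 0) := by
    apply block_sum (fun j => if ¬ p ∣ j then ((j : ZMod (p^k))⁻¹)^2 else 0) (p^k) ?_ d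
    intro t i
    have hcast : ((p^k*t + i : ℕ) : ZMod (p^k)) = (i : ZMod (p^k)) := by
      rw [Nat.cast_add, Nat.cast_mul, Nat.cast_pow]
      have : ((p : ℕ) : ZMod (p^k))^k = 0 := by rw [← Nat.cast_pow, ZMod.natCast_self]
      rw [this, zero_mul, zero_add]
    have hdvd : (p ∣ p^k*t + i) ↔ p ∣ i := by
      have hpk : p ∣ p^k*t := (dvd_pow_self p (by omega)).mul_right t
      constructor
      · intro h
        have := (Nat.dvd_sub h hpk)
        simpa using this
      · intro h
        exact dvd_add hpk h
    beta_reduce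
    rw [hcast]
    simp only [hdvd]
  rw [hsum, mul_smul_comm]
  rw [← Finset.sum_filter]
  rw [six_inv_sum p k hp hk, smul_zero]

lemma eq_one_of_sq_one {p K : ℕ} (hp : p.Prime) (hodd : Odd p) (hK : 1 ≤ K)
    (y : ZMod (p^K)) (h2 : y * y = 1)
    (h1 : ((y.val : ℕ) : ZMod p) = 1) : y = 1 := by
  haveI : NeZero (p^K) := ⟨pow_ne_zero K hp.pos.ne'⟩
  haveI : NeZero p := ⟨hp.pos.ne'⟩
  have hK0 : K ≠ 0 := by omega
  set ρ : ZMod (p^K) →+* ZMod p := ZMod.castHom (dvd_pow_self p hK0) (ZMod p) with hρ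
  have hρval : ∀ z : ZMod (p^K), ρ z = ((z.val : ℕ) : ZMod p) := by
    intro z
    rw [hρ, ZMod.castHom_apply, ← ZMod.natCast_val]
  have hval : ¬ p ∣ (y+1).val := by
    intro h
    have e0 : (((y+1).val : ℕ) : ZMod p) = 0 :=
      (ZMod.natCast_eq_zero_iff _ p).mpr h
    have e1 : ρ (y+1) = 2 := by
      rw [map_add, map_one, hρval y, h1]
      norm_num
    rw [hρval (y+1), e0] at e1
    have hdvd2 : p ∣ 2 := (ZMod.natCast_eq_zero_iff 2 p).mp (by exact_mod_cast e1.symm)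
    have hp2 : p = 2 := (Nat.prime_dvd_prime_iff_eq hp Nat.prime_two).mp hdvd2
    rw [Nat.odd_iff, hp2] at hodd
    simp at hodd
  have hy1 : (((y+1).val : ℕ) : ZMod (p^K)) = y + 1 := by
    rw [ZMod.natCast_val, ZMod.cast_id]
  have hunit : IsUnit (y + 1) := by
    rw [← hy1, ZMod.isUnit_iff_coprime]
    exact ((hp.coprime_iff_not_dvd).mpr hval).symm.pow_right K
  obtain ⟨u, hu⟩ := hunit
  have h3 : (y - 1) * (y + 1) = 0 := by linear_combination h2
  have h4 : y - 1 = 0 := by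
    calc y - 1 = (y-1) * ((y+1) * ↑u⁻¹) := by rw [← hu, Units.mul_inv, mul_one]
      _ = ((y-1)*(y+1)) * ↑u⁻¹ := by ring
      _ = 0 := by rw [h3, zero_mul]
  have := sub_eq_zero.mp h4
  simpa using this



theorem stmt_4 (p k d : ℕ) (hp : p.Prime) (hpodd : Odd p) (hk : 1 ≤ k)
    (hd : 0 < d) (hnd : ¬ p ∣ d) :
    (Nat.choose (3*p^k*d - 1) (p^k*d - 1) : ℤ) ≡
      (Nat.choose (3*p^(k-1)*d - 1) (p^(k-1)*d - 1) : ℤ) [ZMOD (p^(3*k))] := by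
  haveI : NeZero (p^(3*k)) := ⟨pow_ne_zero _ hp.pos.ne'⟩
  haveI : NeZero (p^k) := ⟨pow_ne_zero _ hp.pos.ne'⟩
  set R := ZMod (p^(3*k)) with hR
  set n := p^(k-1)*d with hn
  have hn0 : 0 < n := Nat.mul_pos (pow_pos hp.pos _) hd
  have hpk : p^k = p * p^(k-1) := by
    rw [← pow_succ']; congr 1; omega
  have hm : p^k*d = p*n := by rw [hn, hpk, mul_assoc]
  -- reduce to ZMod equality
  rw [show ((p:ℤ))^(3*k) = ((p^(3*k):ℕ) : ℤ) by push_cast; ring]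
  rw [← ZMod.intCast_eq_intCast_iff]
  push_cast
  -- rewrite the binomial arguments
  have ea1 : 3*p^k*d - 1 = 3*(p*n) - 1 := by rw [← hm, ← mul_assoc]
  have ea2 : p^k*d - 1 = p*n - 1 := by rw [hm]
  have ea3 : 3*p^(k-1)*d - 1 = 3*n - 1 := by rw [hn, ← mul_assoc]
  rw [ea1, ea2, ea3]
  -- the sets and basic objects
  set S : Finset ℕ := (Ico 1 (p*n)).filter (fun j => ¬ p ∣ j) with hS
  set x : ℕ → R := fun j => ((j : R))⁻¹ with hx
  have hxu : ∀ j ∈ S, IsUnit (j : R) := by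
    intro j hj
    rw [hS, Finset.mem_filter] at hj
    exact unit_of_notdvd hp hj.2
  have hx1 : ∀ j ∈ S, (j:R) * x j = 1 := fun j hj => ZMod.mul_inv_of_unit _ (hxu j hj)
  set X : R := ∏ j ∈ S, x j with hX
  have hAX : (∏ j ∈ S, (j:R)) * X = 1 := by
    rw [hX, ← Finset.prod_mul_distrib, Finset.prod_congr rfl hx1, Finset.prod_const_one]
  set Mc : R := (p : R) * (n : R) with hMc
  have hM3 : Mc^3 = 0 := by
    have hnat : (p*n)^3 = p^(3*k)*d^3 := by
      rw [← hm, mul_pow, ← pow_mul, mul_comm k 3]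
    have : ((p*n : ℕ) : R)^3 = 0 := by
      rw [← Nat.cast_pow, hnat, Nat.cast_mul, ZMod.natCast_self, zero_mul]
    rw [hMc, ← Nat.cast_mul]
    exact this
  set G : R := ∏ j ∈ S, (1 + 2*Mc*(x j)) with hG
  have hBX : (∏ j ∈ S, ((2*(p*n) + j : ℕ) : R)) * X = G := by
    rw [hX, hG, ← Finset.prod_mul_distrib]
    apply Finset.prod_congr rfl
    intro j hj
    have h1 := hx1 j hj
    push_cast
    rw [hMc]
    linear_combination h1
  -- membership facts
  have hσmem : ∀ j ∈ S, p*n - j ∈ S := by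
    intro j hj
    rw [hS, Finset.mem_filter, Finset.mem_Ico] at hj ⊢
    obtain ⟨⟨h1, h2⟩, h3⟩ := hj
    refine ⟨⟨by omega, by omega⟩, fun hdv => h3 ?_⟩
    have hpm : p ∣ p*n := dvd_mul_right p n
    have := Nat.dvd_sub hpm hdv
    rwa [show p*n - (p*n - j) = j by omega] at this
  have hbound : ∀ j ∈ S, 1 ≤ j ∧ j < p*n := by
    intro j hj
    rw [hS, Finset.mem_filter, Finset.mem_Ico] at hj
    exact hj.1
  -- squaring
  have hre : ∏ j ∈ S, (1 + 2*Mc*(x (p*n - j))) = G := by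
    rw [hG]
    refine Finset.prod_nbij' (fun j => p*n - j) (fun j => p*n - j) hσmem hσmem ?_ ?_ ?_
    · intro a ha
      have := hbound a ha
      show p*n - (p*n - a) = a
      omega
    · intro a ha
      have := hbound a ha
      show p*n - (p*n - a) = a
      omega
    · intro a ha; rfl
  have hG2 : G * G = ∏ j ∈ S, ((1 + 2*Mc*(x j)) * (1 + 2*Mc*(x (p*n - j)))) := by
    calc G * G = G * ∏ j ∈ S, (1 + 2*Mc*(x (p*n - j))) := by rw [hre]
      _ = ∏ j ∈ S, ((1 + 2*Mc*(x j)) * (1 + 2*Mc*(x (p*n - j)))) := by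
          rw [hG, ← Finset.prod_mul_distrib]
  have hpt : ∀ j ∈ S, (1 + 2*Mc*(x j)) * (1 + 2*Mc*(x (p*n - j)))
      = 1 + Mc^2 * (-(6*(x j)^2)) := by
    intro j hj
    have h1 := hx1 j hj
    have h2 := hx1 _ (hσmem j hj)
    have hle : j ≤ p*n := le_of_lt (hbound j hj).2
    have h3 : ((p*n - j : ℕ) : R) = Mc - (j:R) := by
      rw [Nat.cast_sub hle, Nat.cast_mul, hMc]
    rw [h3] at h2
    have s1 : x j + x (p*n - j) = Mc * x j * x (p*n - j) := by
      linear_combination (-(x j)) * h2 + (-(x (p*n - j))) * h1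
    have s2 : x j * x (p*n - j) = -((x j)^2) + Mc * (x j)^2 * x (p*n - j) := by
      linear_combination (x j) * s1
    linear_combination (2*Mc) * s1 + (6*Mc^2) * s2 + (6*(x j)^2 * x (p*n - j)) * hM3
  have hGsq : G * G = 1 + Mc^2 * ∑ j ∈ S, (-(6*(x j)^2)) := by
    rw [hG2, Finset.prod_congr rfl hpt]
    exact prod_one_add_eps (Mc^2) (by linear_combination Mc * hM3) S _
  -- the kernel argument
  set P2 : R := ∑ j ∈ S, (x j)^2 with hP2
  have hker : Mc^2 * (6 * P2) = 0 := by
    set φ : R →+* ZMod (p^k) := ZMod.castHom (pow_dvd_pow p (by omega : k ≤ 3*k)) (ZMod (p^k)) with hφ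
    have hSeq : (range (p^k*d)).filter (fun j => ¬ p ∣ j) = S := by
      rw [hS, hm]
      ext j
      simp only [Finset.mem_filter, Finset.mem_range, Finset.mem_Ico]
      constructor
      · rintro ⟨h1, h2⟩
        exact ⟨⟨Nat.pos_of_ne_zero (fun h => h2 (h ▸ dvd_zero p)), h1⟩, h2⟩
      · rintro ⟨⟨-, h1⟩, h2⟩
        exact ⟨h1, h2⟩
    have hy : ∀ j ∈ (range (p^k*d)).filter (fun j => ¬ p ∣ j),
        (j : ZMod (p^k)) * φ (x j) = 1 := by
      intro j hj
      rw [hSeq] at hj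
      have h1 := hx1 j hj
      have h2 := congrArg φ h1
      rwa [map_mul, map_natCast, map_one] at h2
    have hone := P2zero p k d hp hk (fun j => φ (x j)) hy
    rw [hSeq] at hone
    have hφ0 : φ (6 * P2) = 0 := by
      rw [map_mul, hP2, map_sum]
      simp only [map_pow]
      have h6 : φ (6 : R) = 6 := map_ofNat φ 6
      rw [h6]
      exact hone
    have hval : (((6*P2 : R).val : ℕ) : ZMod (p^k)) = 0 := by
      rw [ZMod.natCast_val, ← ZMod.castHom_apply (h := pow_dvd_pow p (by omega : k ≤ 3*k))]
      exact hφ0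
    obtain ⟨c, hc⟩ := (ZMod.natCast_eq_zero_iff _ _).mp hval
    have hre2 : (6*P2 : R) = ((p^k * c : ℕ) : R) := by
      rw [← hc, ZMod.natCast_val, ZMod.cast_id]
    have hnat3 : (p*n)^2 * (p^k*c) = p^(3*k) * (d^2 * c) := by
      rw [← hm, mul_pow, ← pow_mul, show 3*k = k*2 + k by omega, pow_add]
      ring
    calc Mc^2 * (6*P2) = ((p*n : ℕ) : R)^2 * ((p^k*c : ℕ) : R) := by
          rw [hre2, hMc]; push_cast +zetaDelta; ring
      _ = (((p*n)^2 * (p^k*c) : ℕ) : R) := by push_cast +zetaDelta; ring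
      _ = 0 := by rw [hnat3, Nat.cast_mul (α := ZMod (p^(3*k))), ZMod.natCast_self, zero_mul]
  have hGG1 : G * G = 1 := by
    rw [hGsq]
    have hsumneg : ∑ j ∈ S, (-(6*(x j)^2)) = -(6 * P2) := by
      rw [hP2, Finset.mul_sum, ← Finset.sum_neg_distrib]
    rw [hsumneg]
    linear_combination - hker
  have hGmodp : ((G.val : ℕ) : ZMod p) = 1 := by
    haveI : NeZero p := ⟨hp.pos.ne'⟩
    set ρ : R →+* ZMod p := ZMod.castHom (dvd_pow_self p (by omega : 3*k ≠ 0)) (ZMod p) with hρ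
    have hρG : ρ G = 1 := by
      rw [hG, map_prod]
      have hfac : ∀ j ∈ S, ρ (1 + 2*Mc*(x j)) = 1 := by
        intro j hj
        simp [hMc, map_natCast, ZMod.natCast_self]
        rw [map_natCast ρ p, ZMod.natCast_self]; ring
      rw [Finset.prod_congr rfl hfac, Finset.prod_const_one]
    rw [ZMod.natCast_val, ← ZMod.castHom_apply (h := dvd_pow_self p (by omega : 3*k ≠ 0))]
    exact hρG
  have hG1 : G = 1 := eq_one_of_sq_one hp hpodd (by omega) G hGG1 hGmodp
  have hBA : ∏ j ∈ S, ((2*(p*n) + j : ℕ) : R) = ∏ j ∈ S, (j:R) := by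
    calc ∏ j ∈ S, ((2*(p*n) + j : ℕ) : R)
        = (∏ j ∈ S, ((2*(p*n) + j : ℕ) : R)) * ((∏ j ∈ S, (j:R)) * X) := by
          rw [hAX, mul_one]
      _ = (∏ j ∈ S, (j:R)) * ((∏ j ∈ S, ((2*(p*n) + j : ℕ) : R)) * X) := by ring
      _ = (∏ j ∈ S, (j:R)) * G := by rw [hBX]
      _ = ∏ j ∈ S, (j:R) := by rw [hG1, mul_one]
  have keyR := congrArg (Nat.cast : ℕ → R) (key_nat p n hp.pos hn0)
  rw [Nat.cast_mul, Nat.cast_mul, Nat.cast_prod, Nat.cast_prod, ← hS] at keyR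
  rw [hBA] at keyR
  calc ((Nat.choose (3*(p*n) - 1) (p*n - 1) : ℕ) : R)
      = ((Nat.choose (3*(p*n) - 1) (p*n - 1) : ℕ) : R) * ((∏ j ∈ S, (j:R)) * X) := by
        rw [hAX, mul_one]
    _ = (((Nat.choose (3*(p*n) - 1) (p*n - 1) : ℕ) : R) * (∏ j ∈ S, (j:R))) * X := by ring
    _ = (((Nat.choose (3*n - 1) (n - 1) : ℕ) : R) * (∏ j ∈ S, (j:R))) * X := by rw [keyR]
    _ = ((Nat.choose (3*n - 1) (n - 1) : ℕ) : R) * ((∏ j ∈ S, (j:R)) * X) := by ring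
    _ = ((Nat.choose (3*n - 1) (n - 1) : ℕ) : R) := by rw [hAX, mul_one]
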